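/- For every nonempty C∞-word w, the following are equivalent: (1) w is fully extendable, i.e., the four words 1w1, 1w2, 2w1 and 2w2 are all C∞-words; (2) w is double-rooted and maximal; (3) w and every nonempty derivative D^j(w) of w have length at least two, begin with two distinct symbols and end with two distinct symbols. -/

import Mathlib

namespace CInfWords

open scoped Classical

/-- Run-length encoding Δ of a word. -/
def rle : List ℕ → List ℕ
  | [] => []
  | [_] => [1]
  | a :: b :: l =>
    if a = b then
      match rle (b :: l) with
      | [] => [1]
      | c :: r => (c + 1) :: r
    else 1 :: rle (b :: l)

/-- Erase a leading `1`, if any. -/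
def trim1 : List ℕ → List ℕ
  | 1 :: l => l
  | l => l

/-- The derivative `D`: the run-length encoding with the first and/or the last
symbol erased when they are equal to `1`. -/
def D (w : List ℕ) : List ℕ := trim1 ((trim1 (rle w).reverse).reverse)

/-- Words over Σ = {1,2}. -/
def IsWord (w : List ℕ) : Prop := ∀ x ∈ w, x = 1 ∨ x = 2

/-- Words over Σ₀ = {0,1,2}. -/
def IsWord0 (w : List ℕ) : Prop := ∀ x ∈ w, x = 0 ∨ x = 1 ∨ x = 2

/-- Σ₀^{++}: words over Σ₀ that are empty or begin with a nonzero symbol. -/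
def Spp (w : List ℕ) : Prop := IsWord0 w ∧ (w = [] ∨ w.headI ≠ 0)

/-- C^∞-words: every iterated derivative is a word over Σ = {1,2}. -/
def Cinf (w : List ℕ) : Prop := ∀ k, IsWord (D^[k] w)

/-- The height of a C^∞-word: the least k with D^[k] w = ε. -/
noncomputable def height (w : List ℕ) : ℕ := sInf {k | D^[k] w = []}

/-- The root of a C^∞-word of height k > 0: its (k-1)-st derivative. -/
noncomputable def root (w : List ℕ) : List ℕ := D^[height w - 1] w

/-- `v` is a primitive of `w`. -/
def Primitive (v w : List ℕ) : Prop := IsWord v ∧ D v = w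

/-- The complement: swap 1's and 2's. -/
def compl (w : List ℕ) : List ℕ := w.map (fun x => 3 - x)

/-- Minimal C^∞-words: every derivative is a shortest primitive of the next one. -/
def Minimal (w : List ℕ) : Prop :=
  Cinf w ∧ 0 < height w ∧
    ∀ j, j + 2 ≤ height w → ∀ v, Primitive v (D^[j+1] w) → (D^[j] w).length ≤ v.length

/-- Maximal C^∞-words: every derivative is a longest primitive of the next one. -/
def Maximal (w : List ℕ) : Prop :=
  Cinf w ∧ 0 < height w ∧
    ∀ j, j + 2 ≤ height w → ∀ v, Primitive v (D^[j+1] w) → v.length ≤ (D^[j] w).length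

def LeftMinimal (w : List ℕ) : Prop := ∃ v, Minimal v ∧ w <+: v
def RightMinimal (w : List ℕ) : Prop := ∃ v, Minimal v ∧ w <:+ v
def LeftMaximal (w : List ℕ) : Prop := ∃ v, Maximal v ∧ w <+: v
def RightMaximal (w : List ℕ) : Prop := ∃ v, Maximal v ∧ w <:+ v

/-- Single-rooted minimal words. -/
def SRMin (w : List ℕ) : Prop := Minimal w ∧ (root w).length = 1

/-- Double-rooted minimal words. -/
def DRMin (w : List ℕ) : Prop := Minimal w ∧ (root w).length = 2

/-- The left frontier Ψ(w). -/
noncomputable def psi (w : List ℕ) : List ℕ :=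
  (List.range (height w)).map fun i =>
    if i = 0 then w.getD 0 0
    else if (D^[i] w).getD 0 0 = 2 ∧ (D^[i-1] w).getD 0 0 ≠ (D^[i-1] w).getD 1 0
      then 0
    else (D^[i] w).getD 0 0

/-- The single-rooted minimal word with left frontier U (if it exists). -/
noncomputable def srmOf (U : List ℕ) : List ℕ :=
  if h : ∃ w, SRMin w ∧ psi w = U then h.choose else []

/-- The double-rooted minimal word with left frontier U (if it exists). -/
noncomputable def drmOf (U : List ℕ) : List ℕ :=
  if h : ∃ w, DRMin w ∧ psi w = U then h.choose else []

/-- Γs: the right frontier of the single-rooted minimal word with left frontier U. -/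
noncomputable def Gs (U : List ℕ) : List ℕ := psi (srmOf U).reverse

/-- Γd: the right frontier of the double-rooted minimal word with left frontier U. -/
noncomputable def Gd (U : List ℕ) : List ℕ := psi (drmOf U).reverse

/-- Θ = Γs ∘ Γd. -/
noncomputable def Th (U : List ℕ) : List ℕ := Gs (Gd U)

/-- Π = Γd ∘ Γs. -/
noncomputable def Pp (U : List ℕ) : List ℕ := Gd (Gs U)

/-- One step in the graph G: from node U, the edge labeled 1 goes to U·1, the edge
labeled 2 goes to U·2, and the edge labeled 0 goes to Θ(U)·2. -/
noncomputable def step (U : List ℕ) (a : ℕ) : List ℕ :=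
  if a = 1 then U ++ [1] else if a = 2 then U ++ [2] else Th U ++ [2]

/-- The endpoint of the path in G starting at the origin ε and labeled by W. -/
noncomputable def pathEnd (W : List ℕ) : List ℕ := W.foldl step []

/-- W ∈ Σ₀^{++} labels a directed path in G from ε to U. -/
def LabelsPath (W U : List ℕ) : Prop := Spp W ∧ pathEnd W = U

/-- ‖U‖: the number of words in Σ₀^{++} labeling a path in G from ε to U. -/
noncomputable def normG (U : List ℕ) : ℕ := {W | LabelsPath W U}.ncard

/-- |U|: the length of the single-rooted minimal word with left frontier U. -/
noncomputable def len (U : List ℕ) : ℕ := (srmOf U).length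

/-- u is the minimal part of w: the first (leftmost-occurring) factor of w that
is a single-rooted minimal word of the same height as w. -/
def IsMinPart (u w : List ℕ) : Prop :=
  ∃ s t, w = s ++ u ++ t ∧ SRMin u ∧ height u = height w ∧
    ∀ u' s' t', w = s' ++ u' ++ t' → SRMin u' → height u' = height w →
      s.length ≤ s'.length


/- ===================== auxiliary development ===================== -/

section Aux

theorem trim1_nil : trim1 [] = [] := rfl

theorem trim1_one (l : List ℕ) : trim1 (1 :: l) = l := rfl

theorem trim1_ne {a : ℕ} (h : a ≠ 1) (l : List ℕ) : trim1 (a :: l) = a :: l := by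
  rcases a with _ | _ | n
  · rfl
  · exact absurd rfl h
  · rfl

theorem trim1_cases (l : List ℕ) : l = 1 :: trim1 l ∨ trim1 l = l := by
  cases l with
  | nil => exact Or.inr rfl
  | cons a t =>
    by_cases h : a = 1
    · subst h; exact Or.inl rfl
    · exact Or.inr (trim1_ne h t)

theorem trim1_sum (l : List ℕ) : l.sum ≤ (trim1 l).sum + 1 := by
  rcases trim1_cases l with h | h
  · have := congrArg List.sum h
    simp at this
    omega
  · rw [h]; omega

theorem trim1_length (l : List ℕ) : (trim1 l).length ≤ l.length := by
  rcases trim1_cases l with h | h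
  · have := congrArg List.length h
    simp at this
    omega
  · rw [h]

theorem trim1_append {c : ℕ} (hc : c ≠ 1) (u : List ℕ) :
    trim1 (u ++ [c]) = trim1 u ++ [c] := by
  cases u with
  | nil => simp [trim1_ne hc, trim1_nil]
  | cons a u' =>
    by_cases h : a = 1
    · subst h
      rw [List.cons_append, trim1_one, trim1_one]
    · rw [List.cons_append, trim1_ne h, trim1_ne h]
      simp

theorem rle_nil : rle [] = [] := rfl

theorem rle_singleton (a : ℕ) : rle [a] = [1] := rfl

theorem rle_ne_nil : ∀ {w : List ℕ}, w ≠ [] → rle w ≠ []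
  | [], h => absurd rfl h
  | [_], _ => by simp [rle]
  | a :: b :: l, _ => by
    simp only [rle]
    split
    · cases h : rle (b :: l) <;> simp
    · simp

theorem rle_cons_eq (a : ℕ) (l : List ℕ) :
    rle (a :: a :: l) = ((rle (a :: l)).headI + 1) :: (rle (a :: l)).tail := by
  have h := rle_ne_nil (w := a :: l) (by simp)
  simp only [rle, if_pos rfl]
  cases h2 : rle (a :: l) with
  | nil => exact absurd h2 h
  | cons c r => simp

theorem rle_cons_ne {a b : ℕ} (h : a ≠ b) (l : List ℕ) :
    rle (a :: b :: l) = 1 :: rle (b :: l) := by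
  simp [rle, h]

theorem rle_cons {w : List ℕ} (hw : w ≠ []) (a : ℕ) :
    rle (a :: w) =
      if a = w.headI then ((rle w).headI + 1) :: (rle w).tail else 1 :: rle w := by
  cases w with
  | nil => exact absurd rfl hw
  | cons b l =>
    by_cases h : a = b
    · subst h; rw [rle_cons_eq]; simp
    · rw [rle_cons_ne h]; simp [h]

theorem rle_sum : ∀ w : List ℕ, (rle w).sum = w.length
  | [] => rfl
  | [_] => rfl
  | a :: b :: l => by
    have ih := rle_sum (b :: l)
    have hne := rle_ne_nil (w := b :: l) (by simp)
    by_cases h : a = b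
    · subst h
      rw [rle_cons_eq]
      cases h2 : rle (a :: l) with
      | nil => exact absurd h2 hne
      | cons c r =>
        rw [h2] at ih
        simp at ih ⊢
        omega
    · rw [rle_cons_ne h]
      simp at ih ⊢
      omega

theorem rle_pos : ∀ (w : List ℕ), ∀ x ∈ rle w, 1 ≤ x
  | [] => by simp [rle]
  | [_] => by simp [rle]
  | a :: b :: l => by
    have ih := rle_pos (b :: l)
    have hne := rle_ne_nil (w := b :: l) (by simp)
    by_cases h : a = b
    · subst h
      rw [rle_cons_eq]
      intro x hx
      cases h2 : rle (a :: l) with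
      | nil => exact absurd h2 hne
      | cons c r =>
        rw [h2] at hx
        simp at hx
        rcases hx with h3 | h3
        · omega
        · exact ih x (by rw [h2]; exact List.mem_cons_of_mem _ h3)
    · rw [rle_cons_ne h]
      intro x hx
      rcases List.mem_cons.mp hx with h3 | h3
      · omega
      · exact ih x h3

theorem rle_replicate : ∀ (n x : ℕ), rle (List.replicate (n + 1) x) = [n + 1]
  | 0, x => rfl
  | n + 1, x => by
    have ih := rle_replicate n x
    have e : List.replicate (n + 2) x = x :: x :: List.replicate n x := by
      simp [List.replicate_succ]
    rw [e, rle_cons_eq]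
    have e2 : (x :: List.replicate n x : List ℕ) = List.replicate (n + 1) x := by
      simp [List.replicate_succ]
    rw [e2, ih]
    simp

theorem rle_rep_append : ∀ (n x : ℕ) (t : List ℕ), (t = [] ∨ t.headI ≠ x) →
    rle (List.replicate (n + 1) x ++ t) = (n + 1) :: rle t
  | 0, x, t, ht => by
    rcases ht with rfl | ht
    · simp [rle]
    · cases t with
      | nil => simp [rle]
      | cons y l =>
        have : x ≠ y := fun h => ht (by simp [h.symm])
        simpa using rle_cons_ne this l
  | n + 1, x, t, ht => by
    have ih := rle_rep_append n x t ht
    have e : List.replicate (n + 2) x ++ t = x :: x :: (List.replicate n x ++ t) := by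
      simp [List.replicate_succ]
    rw [e, rle_cons_eq]
    have e2 : (x :: (List.replicate n x ++ t) : List ℕ) = List.replicate (n + 1) x ++ t := by
      simp [List.replicate_succ]
    rw [e2, ih]
    simp

theorem exists_block : ∀ (w : List ℕ), w ≠ [] →
    ∃ n t, w = List.replicate (n + 1) w.headI ++ t ∧ (t = [] ∨ t.headI ≠ w.headI) ∧
      rle w = (n + 1) :: rle t
  | [], h => absurd rfl h
  | [x], _ => ⟨0, [], by simp, Or.inl rfl, by simp [rle]⟩
  | x :: y :: l, _ => by
    by_cases h : x = y
    · subst h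
      obtain ⟨n, t, e1, e2, e3⟩ := exists_block (x :: l) (by simp)
      simp only [List.headI] at e1 e2 ⊢
      refine ⟨n + 1, t, ?_, e2, ?_⟩
      · rw [List.replicate_succ, List.cons_append, ← e1]
      · rw [rle_cons_eq, e3]
        simp
    · exact ⟨0, y :: l, by simp, Or.inr (by simpa using Ne.symm h), by rw [rle_cons_ne h]⟩

theorem rle_snoc_block : ∀ (t : List ℕ) (x n : ℕ), t.getLast? ≠ some x →
    rle (t ++ List.replicate (n + 1) x) = rle t ++ [n + 1]
  | [], x, n, _ => by simpa [rle_nil] using rle_replicate n x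
  | [y], x, n, h => by
    have hy : y ≠ x := by simpa using h
    have e : [y] ++ List.replicate (n + 1) x = y :: x :: List.replicate n x := by
      simp [List.replicate_succ]
    rw [e, rle_cons_ne hy]
    have e2 : (x :: List.replicate n x : List ℕ) = List.replicate (n + 1) x := by
      simp [List.replicate_succ]
    rw [e2, rle_replicate]
    rfl
  | y :: z :: t', x, n, h => by
    have h' : (z :: t').getLast? ≠ some x := by
      rwa [List.getLast?_cons_cons] at h
    have ih := rle_snoc_block (z :: t') x n h'
    by_cases hyz : y = z
    · subst hyz
      have e : (y :: y :: t') ++ List.replicate (n + 1) x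
          = y :: y :: (t' ++ List.replicate (n + 1) x) := by simp
      rw [e, rle_cons_eq]
      have e2 : (y :: (t' ++ List.replicate (n + 1) x) : List ℕ)
          = (y :: t') ++ List.replicate (n + 1) x := rfl
      rw [e2, ih, rle_cons_eq]
      cases h2 : rle (y :: t') with
      | nil => exact absurd h2 (rle_ne_nil (by simp))
      | cons c r => simp
    · have e : (y :: z :: t') ++ List.replicate (n + 1) x
          = y :: (z :: (t' ++ List.replicate (n + 1) x)) := by simp
      rw [e, rle_cons_ne hyz]
      have e2 : (z :: (t' ++ List.replicate (n + 1) x) : List ℕ)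
          = (z :: t') ++ List.replicate (n + 1) x := rfl
      rw [e2, ih, rle_cons_ne hyz]
      rfl

theorem rle_reverse_aux : ∀ (n : ℕ) (w : List ℕ), w.length ≤ n →
    rle w.reverse = (rle w).reverse := by
  intro n
  induction n with
  | zero =>
    intro w h
    have : w = [] := List.length_eq_zero_iff.mp (Nat.le_zero.mp h)
    subst this; rfl
  | succ n ih =>
    intro w hlen
    rcases eq_or_ne w [] with rfl | hne
    · rfl
    · obtain ⟨m, t, e1, e2, e3⟩ := exists_block w hne
      have hlt : t.length ≤ n := by
        have := congrArg List.length e1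
        simp at this
        omega
      have hrev : w.reverse = t.reverse ++ List.replicate (m + 1) w.headI := by
        rw [show w.reverse = (List.replicate (m + 1) w.headI ++ t).reverse from by rw [← e1]]
        simp
      have hside : t.reverse.getLast? ≠ some w.headI := by
        rcases e2 with rfl | h2
        · simp
        · rw [List.getLast?_reverse]
          cases t with
          | nil => simp
          | cons a s =>
            simp only [List.head?_cons, ne_eq, Option.some.injEq]
            exact fun hh => h2 (by simpa using hh)
      rw [hrev, rle_snoc_block _ _ _ hside, ih t hlt, e3]
      simp

theorem rle_reverse (w : List ℕ) : rle w.reverse = (rle w).reverse :=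
  rle_reverse_aux w.length w le_rfl

end Aux


section Aux2

theorem two_ne_one' : (2 : ℕ) ≠ 1 := by norm_num

theorem D_nil : D [] = [] := rfl

theorem D_eq_of_rle {v s : List ℕ} (h : rle v = 1 :: (s ++ [1])) : D v = s := by
  unfold D
  rw [h]
  have e1 : (1 :: (s ++ [1])).reverse = 1 :: (s.reverse ++ [1]) := by simp
  have e2 : (s.reverse ++ [1]).reverse = 1 :: s := by simp
  rw [e1, trim1_one, e2, trim1_one]

theorem D_head_big {v : List ℕ} {c : ℕ} {t : List ℕ} (h : rle v = c :: t) (hc : 2 ≤ c) :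
    ∃ r, D v = c :: r := by
  have hc1 : c ≠ 1 := by omega
  unfold D
  rw [h, show (c :: t).reverse = t.reverse ++ [c] by simp, trim1_append hc1,
    show (trim1 t.reverse ++ [c]).reverse = c :: (trim1 t.reverse).reverse by simp,
    trim1_ne hc1]
  exact ⟨_, rfl⟩

theorem trim_comm (l : List ℕ) :
    trim1 ((trim1 l).reverse) = (trim1 ((trim1 l.reverse).reverse)).reverse := by
  rcases List.eq_nil_or_concat l with rfl | ⟨s, d, hl⟩
  · rfl
  · rw [List.concat_eq_append] at hl
    subst hl
    cases s with
    | nil =>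
      simp only [List.nil_append]
      by_cases hd : d = 1
      · subst hd; rfl
      · simp [trim1_ne hd]
    | cons c s' =>
      have e0 : (c :: s') ++ [d] = c :: (s' ++ [d]) := rfl
      rw [e0]
      have erev : (c :: (s' ++ [d])).reverse = d :: (s'.reverse ++ [c]) := by simp
      by_cases hc : c = 1 <;> by_cases hd : d = 1 <;>
        simp [hc, hd, trim1_one, trim1_ne]

theorem D_reverse (w : List ℕ) : D w.reverse = (D w).reverse := by
  unfold D
  rw [rle_reverse, List.reverse_reverse]
  exact trim_comm (rle w)

theorem D_iterate_nil (k : ℕ) : D^[k] ([] : List ℕ) = [] :=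
  Function.iterate_fixed rfl k

theorem D_iterate_reverse : ∀ (k : ℕ) (w : List ℕ), D^[k] w.reverse = (D^[k] w).reverse := by
  intro k
  induction k with
  | zero => intro w; rfl
  | succ k ih =>
    intro w
    rw [Function.iterate_succ_apply, Function.iterate_succ_apply, D_reverse, ih]

theorem cinf_D {w : List ℕ} (h : Cinf w) : Cinf (D w) := by
  intro k
  have := h (k + 1)
  rwa [Function.iterate_succ_apply] at this

theorem cinf_of {w : List ℕ} (hw : IsWord w) (h : Cinf (D w)) : Cinf w := by
  intro k
  cases k with
  | zero => simpa using hw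
  | succ k => rw [Function.iterate_succ_apply]; exact h k

theorem cinf_nil : Cinf [] := by
  intro k
  rw [D_iterate_nil]
  intro x hx
  exact absurd hx List.not_mem_nil

theorem cinf_reverse {w : List ℕ} (h : Cinf w) : Cinf w.reverse := by
  intro k
  rw [D_iterate_reverse]
  intro x hx
  exact h k x (List.mem_reverse.mp hx)

theorem length_le_sum : ∀ (l : List ℕ), (∀ x ∈ l, 1 ≤ x) → l.length ≤ l.sum
  | [], _ => le_refl 0
  | a :: t, h => by
    have ht := length_le_sum t (fun x hx => h x (List.mem_cons_of_mem a hx))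
    have ha := h a List.mem_cons_self
    simp only [List.length_cons, List.sum_cons]
    omega

theorem length_D_lt {w : List ℕ} (hw : w ≠ []) : (D w).length < w.length := by
  have hlen1 : (rle w).length ≤ (rle w).sum := length_le_sum _ (rle_pos w)
  have hsum : (rle w).sum = w.length := rle_sum w
  have h3 : (D w).length ≤ (trim1 (rle w).reverse).length := by
    unfold D
    calc (trim1 ((trim1 (rle w).reverse).reverse)).length
        ≤ ((trim1 (rle w).reverse).reverse).length := trim1_length _
      _ = (trim1 (rle w).reverse).length := by simp
  have hwpos : 1 ≤ w.length := by
    cases w with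
    | nil => exact absurd rfl hw
    | cons a t => simp
  rcases trim1_cases (rle w).reverse with h | h
  · have := congrArg List.length h
    simp at this
    omega
  · -- head of reverse is not 1 (or reverse empty)
    cases hrev : (rle w).reverse with
    | nil =>
      have : rle w = [] := by simpa using congrArg List.reverse hrev
      exact absurd this (rle_ne_nil hw)
    | cons c t' =>
      by_cases hc : c = 1
      · exfalso
        rw [hrev, hc] at h
        rw [trim1_one] at h
        have := congrArg List.length h
        simp at this
      · have hcmem : c ∈ rle w := by
          rw [← List.mem_reverse, hrev]; exact List.mem_cons_self
        have hc2 : 2 ≤ c := by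
          have := rle_pos w c hcmem
          omega
        have ht' : ∀ x ∈ t', 1 ≤ x := by
          intro x hx
          exact rle_pos w x (by rw [← List.mem_reverse, hrev]; exact List.mem_cons_of_mem _ hx)
        have hsum2 : (rle w).sum = c + t'.sum := by
          rw [← List.sum_reverse, hrev]; simp
        have hlen2 : (rle w).length = t'.length + 1 := by
          have := congrArg List.length hrev
          simpa using this
        have ht'len := length_le_sum t' ht'
        have h4 : (trim1 (rle w).reverse).length ≤ (rle w).length := by
          have := trim1_length (rle w).reverse
          simpa using this
        omega

theorem exists_D_nil_aux : ∀ (n : ℕ) (w : List ℕ), w.length ≤ n → ∃ k, D^[k] w = [] := by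
  intro n
  induction n with
  | zero =>
    intro w h
    exact ⟨0, List.length_eq_zero_iff.mp (Nat.le_zero.mp h)⟩
  | succ n ih =>
    intro w hlen
    rcases eq_or_ne w [] with rfl | hne
    · exact ⟨0, rfl⟩
    · obtain ⟨k, hk⟩ := ih (D w) (by have := length_D_lt hne; omega)
      exact ⟨k + 1, by rwa [Function.iterate_succ_apply]⟩

theorem exists_D_nil (w : List ℕ) : ∃ k, D^[k] w = [] :=
  exists_D_nil_aux w.length w le_rfl

theorem D_iterate_height (w : List ℕ) : D^[height w] w = [] :=
  Nat.sInf_mem (exists_D_nil w)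

theorem D_iterate_ne {w : List ℕ} {k : ℕ} (h : k < height w) : D^[k] w ≠ [] :=
  fun hh => Nat.notMem_of_lt_sInf h hh

theorem D_iterate_of_ge {w : List ℕ} {k : ℕ} (h : height w ≤ k) : D^[k] w = [] := by
  obtain ⟨m, hm⟩ := Nat.exists_eq_add_of_le h
  subst hm
  rw [Nat.add_comm, Function.iterate_add_apply, D_iterate_height, D_iterate_nil]

theorem height_pos {w : List ℕ} (h : w ≠ []) : 0 < height w := by
  by_contra hh
  exact h (by simpa using D_iterate_of_ge (w := w) (k := 0) (by omega))

end Aux2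


section Aux3

/-- The property of beginning and ending with two distinct symbols. -/
def P3 (u : List ℕ) : Prop :=
  2 ≤ u.length ∧ u.getD 0 0 ≠ u.getD 1 0 ∧
    u.getD (u.length - 1) 0 ≠ u.getD (u.length - 2) 0

theorem getD_last2 {u : List ℕ} (h : 2 ≤ u.length) :
    u.getD (u.length - 1) 0 = u.reverse.getD 0 0 ∧
      u.getD (u.length - 2) 0 = u.reverse.getD 1 0 := by
  rcases hr : u.reverse with _ | ⟨a, t⟩
  · exfalso
    rw [← @List.length_reverse _ u, hr] at h
    simp at h
  rcases t with _ | ⟨b, r⟩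
  · exfalso
    rw [← @List.length_reverse _ u, hr] at h
    simp at h
  have hu : u = r.reverse ++ [b, a] := by
    have := congrArg List.reverse hr
    simp at this
    exact this
  constructor
  · rw [hu]
    have e : (r.reverse ++ [b, a]).length - 1 = r.reverse.length + 1 := by simp
    rw [e, List.getD_eq_getElem _ _ (by simp)]
    simp [List.getElem_append_right]
  · rw [hu]
    have e : (r.reverse ++ [b, a]).length - 2 = r.reverse.length := by simp
    rw [e, List.getD_eq_getElem _ _ (by simp)]
    simp [List.getElem_append_right]

theorem rle_head_one_iff {x y : ℕ} (l : List ℕ) :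
    (rle (x :: y :: l)).headI = 1 ↔ x ≠ y := by
  constructor
  · intro h hxy
    subst hxy
    rw [rle_cons_eq] at h
    have hmem : (rle (x :: l)).headI ∈ rle (x :: l) := by
      cases h2 : rle (x :: l) with
      | nil => exact absurd h2 (rle_ne_nil (by simp))
      | cons c r => simp
    have := rle_pos _ _ hmem
    simp at h
    omega
  · intro h
    rw [rle_cons_ne h]
    rfl

theorem form_of_heads {w : List ℕ} (h2 : 2 ≤ w.length) (h1 : (rle w).headI = 1)
    (h1r : ((rle w).reverse).headI = 1) : rle w = 1 :: (D w ++ [1]) := by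
  have hwne : w ≠ [] := by
    intro h; rw [h] at h2; simp at h2
  have hne : rle w ≠ [] := rle_ne_nil hwne
  obtain ⟨t, ht⟩ : ∃ t, rle w = 1 :: t := by
    cases h : rle w with
    | nil => exact absurd h hne
    | cons c r =>
      rw [h] at h1
      simp at h1
      exact ⟨r, by rw [h1]⟩
  have htne : t ≠ [] := by
    rintro rfl
    have := rle_sum w
    rw [ht] at this
    simp at this
    omega
  obtain ⟨s, d, hs⟩ := (List.eq_nil_or_concat t).resolve_left htne
  rw [List.concat_eq_append] at hs
  have hd : d = 1 := by
    rw [ht, hs] at h1r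
    simpa using h1r
  subst hd
  subst hs
  have hD : D w = s := D_eq_of_rle ht
  rw [ht, hD]

theorem P3_of_form {u : List ℕ} (h : rle u = 1 :: (D u ++ [1])) : P3 u := by
  have hsum := rle_sum u
  rw [h] at hsum
  simp at hsum
  have h2 : 2 ≤ u.length := by omega
  obtain ⟨x, t, hxt⟩ : ∃ x t, u = x :: t := by
    cases u with
    | nil => simp at h2
    | cons x t => exact ⟨x, t, rfl⟩
  obtain ⟨y, l, hyl⟩ : ∃ y l, u = x :: y :: l := by
    cases t with
    | nil => rw [hxt] at h2; simp at h2
    | cons y l => exact ⟨y, l, by rw [hxt]⟩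
  have hxy : x ≠ y := by
    rw [hyl] at h
    exact (rle_head_one_iff l).mp (by rw [h]; rfl)
  obtain ⟨e1, e2⟩ := getD_last2 h2
  have hrevhead : (rle u.reverse).headI = 1 := by
    rw [rle_reverse, h]
    have : (1 :: (D u ++ [1])).reverse = 1 :: ((D u).reverse ++ [1]) := by simp
    rw [this]
    rfl
  have hrev2 : 2 ≤ u.reverse.length := by simpa using h2
  obtain ⟨x', t', hxt'⟩ : ∃ x' t', u.reverse = x' :: t' := by
    cases hh : u.reverse with
    | nil => rw [hh] at hrev2; simp at hrev2
    | cons x' t' => exact ⟨x', t', rfl⟩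
  obtain ⟨y', l', hyl'⟩ : ∃ y' l', u.reverse = x' :: y' :: l' := by
    cases t' with
    | nil => rw [hxt'] at hrev2; simp at hrev2
    | cons y' l' => exact ⟨y', l', by rw [hxt']⟩
  have hxy' : x' ≠ y' := by
    rw [hyl'] at hrevhead
    exact (rle_head_one_iff l').mp hrevhead
  refine ⟨h2, ?_, ?_⟩
  · rw [hyl]; simpa using hxy
  · rw [e1, e2, hyl']
    simpa using hxy'

theorem form_of_P3 {u : List ℕ} (h : P3 u) : rle u = 1 :: (D u ++ [1]) := by
  obtain ⟨h2, ha, hb⟩ := h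
  obtain ⟨x, y, l, hyl⟩ : ∃ x y l, u = x :: y :: l := by
    cases u with
    | nil => simp at h2
    | cons x t =>
      cases t with
      | nil => simp at h2
      | cons y l => exact ⟨x, y, l, rfl⟩
  have h1 : (rle u).headI = 1 := by
    rw [hyl]
    apply (rle_head_one_iff l).mpr
    rw [hyl] at ha
    simpa using ha
  have h1r : ((rle u).reverse).headI = 1 := by
    rw [← rle_reverse]
    have hrev2 : 2 ≤ u.reverse.length := by simpa using h2
    obtain ⟨x', y', l', hyl'⟩ : ∃ x' y' l', u.reverse = x' :: y' :: l' := by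
      cases hh : u.reverse with
      | nil => rw [hh] at hrev2; simp at hrev2
      | cons x' t' =>
        cases t' with
        | nil => rw [hh] at hrev2; simp at hrev2
        | cons y' l' => exact ⟨x', y', l', rfl⟩
    rw [hyl']
    apply (rle_head_one_iff l').mpr
    obtain ⟨e1, e2⟩ := getD_last2 h2
    rw [e1, e2, hyl'] at hb
    simpa using hb
  exact form_of_heads h2 h1 h1r

theorem D_shape22 {v s : List ℕ} (h : rle v = 2 :: (s ++ [2])) : D v = 2 :: (s ++ [2]) := by
  unfold D
  rw [h]
  have e1 : (2 :: (s ++ [2]) : List ℕ).reverse = 2 :: (s.reverse ++ [2]) := by simp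
  have e2 : (2 :: (s.reverse ++ [2]) : List ℕ).reverse = 2 :: (s ++ [2]) := by simp
  rw [e1, trim1_ne two_ne_one', e2, trim1_ne two_ne_one']

theorem D_shape21 {v s : List ℕ} (h : rle v = 2 :: (s ++ [1, 1])) : D v = 2 :: (s ++ [1]) := by
  unfold D
  rw [h]
  have e1 : (2 :: (s ++ [1, 1]) : List ℕ).reverse = 1 :: (1 :: s.reverse ++ [2]) := by simp
  have e2 : (1 :: s.reverse ++ [2] : List ℕ).reverse = 2 :: (s ++ [1]) := by simp
  rw [e1, trim1_one, e2, trim1_ne two_ne_one']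

theorem D_shape12 {v s : List ℕ} (h : rle v = 1 :: (1 :: s ++ [2])) : D v = 1 :: (s ++ [2]) := by
  unfold D
  rw [h]
  have e1 : (1 :: (1 :: s ++ [2]) : List ℕ).reverse = 2 :: (s.reverse ++ [1, 1]) := by simp
  have e2 : (2 :: (s.reverse ++ [1, 1]) : List ℕ).reverse = 1 :: (1 :: s ++ [2]) := by simp
  rw [e1, trim1_ne two_ne_one', e2, trim1_one]
  simp

theorem D_shape11 {v s : List ℕ} (h : rle v = 1 :: (1 :: s ++ [1, 1])) :
    D v = 1 :: (s ++ [1]) := by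
  unfold D
  rw [h]
  have e1 : (1 :: (1 :: s ++ [1, 1]) : List ℕ).reverse = 1 :: (1 :: s.reverse ++ [1, 1]) := by
    simp
  have e2 : (1 :: s.reverse ++ [1, 1] : List ℕ).reverse = 1 :: (1 :: s ++ [1]) := by simp
  rw [e1, trim1_one, e2, trim1_one]
  simp

theorem D_ext {w : List ℕ} (hf : rle w = 1 :: (D w ++ [1])) (a b : ℕ) :
    D (a :: (w ++ [b])) =
      (if a = w.headI then 2 else 1) :: (D w ++ [if b = w.reverse.headI then 2 else 1]) := by
  set s := D w with hs
  have hwne : w ≠ [] := by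
    intro h; rw [h] at hf; simp [rle] at hf
  have hrne : w.reverse ≠ [] := by simpa using hwne
  have hwbne : w ++ [b] ≠ [] := by simp
  have hrev : rle w.reverse = 1 :: (s.reverse ++ [1]) := by
    rw [rle_reverse, hf]
    simp
  have hhead : (w ++ [b]).headI = w.headI := by
    cases w with
    | nil => exact absurd rfl hwne
    | cons c t => rfl
  have hwb : rle (w ++ [b]) = (rle (b :: w.reverse)).reverse := by
    have : w ++ [b] = (b :: w.reverse).reverse := by simp
    rw [this, rle_reverse]
  by_cases hb : b = w.reverse.headI <;> by_cases ha : a = w.headI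
  · -- b = , a =
    have e1 : rle (b :: w.reverse) = 2 :: (s.reverse ++ [1]) := by
      rw [rle_cons hrne, if_pos hb, hrev]
      simp
    have e2 : rle (w ++ [b]) = 1 :: (s ++ [2]) := by
      rw [hwb, e1]; simp
    have e3 : rle (a :: (w ++ [b])) = 2 :: (s ++ [2]) := by
      rw [rle_cons hwbne, hhead, if_pos ha, e2]
      simp
    rw [D_shape22 e3, if_pos ha, if_pos hb]
  · -- b = , a ≠
    have e1 : rle (b :: w.reverse) = 2 :: (s.reverse ++ [1]) := by
      rw [rle_cons hrne, if_pos hb, hrev]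
      simp
    have e2 : rle (w ++ [b]) = 1 :: (s ++ [2]) := by
      rw [hwb, e1]; simp
    have e3 : rle (a :: (w ++ [b])) = 1 :: (1 :: s ++ [2]) := by
      rw [rle_cons hwbne, hhead, if_neg ha, e2]
      simp
    rw [D_shape12 e3, if_neg ha, if_pos hb]
  · -- b ≠ , a =
    have e1 : rle (b :: w.reverse) = 1 :: (1 :: (s.reverse ++ [1])) := by
      rw [rle_cons hrne, if_neg hb, hrev]
    have e2 : rle (w ++ [b]) = 1 :: (s ++ [1, 1]) := by
      rw [hwb, e1]; simp
    have e3 : rle (a :: (w ++ [b])) = 2 :: (s ++ [1, 1]) := by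
      rw [rle_cons hwbne, hhead, if_pos ha, e2]
      simp
    rw [D_shape21 e3, if_pos ha, if_neg hb]
  · -- b ≠ , a ≠
    have e1 : rle (b :: w.reverse) = 1 :: (1 :: (s.reverse ++ [1])) := by
      rw [rle_cons hrne, if_neg hb, hrev]
    have e2 : rle (w ++ [b]) = 1 :: (s ++ [1, 1]) := by
      rw [hwb, e1]; simp
    have e3 : rle (a :: (w ++ [b])) = 1 :: (1 :: s ++ [1, 1]) := by
      rw [rle_cons hwbne, hhead, if_neg ha, e2]
      simp
    rw [D_shape11 e3, if_neg ha, if_neg hb]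

theorem sum_D_ge (v : List ℕ) : (rle v).sum ≤ (D v).sum + 2 := by
  have a1 := trim1_sum (rle v).reverse
  have a2 := trim1_sum (trim1 (rle v).reverse).reverse
  have : D v = trim1 ((trim1 (rle v).reverse).reverse) := rfl
  rw [← this] at a2
  simp only [List.sum_reverse] at a1 a2
  omega

theorem length_prim_le {v u : List ℕ} (h : D v = u) : v.length ≤ u.sum + 2 := by
  have h1 := sum_D_ge v
  have h2 := rle_sum v
  rw [h] at h1
  omega

theorem form_of_sum_eq {v : List ℕ} (h : (rle v).sum = (D v).sum + 2) :
    rle v = 1 :: (D v ++ [1]) := by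
  have hD : D v = trim1 ((trim1 (rle v).reverse).reverse) := rfl
  have a1 := trim1_sum (rle v).reverse
  have a2 := trim1_sum (trim1 (rle v).reverse).reverse
  rw [← hD] at a2
  simp only [List.sum_reverse] at a1 a2
  have key1 : (rle v).reverse = 1 :: trim1 (rle v).reverse := by
    rcases trim1_cases (rle v).reverse with h1 | h1
    · exact h1
    · exfalso
      have := congrArg List.sum h1
      simp only [List.sum_reverse] at this
      omega
  have hs1 : (trim1 (rle v).reverse).sum = (D v).sum + 1 := by
    have := congrArg List.sum key1
    simp only [List.sum_reverse] at this
    simp at this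
    omega
  have key2 : (trim1 (rle v).reverse).reverse = 1 :: D v := by
    rcases trim1_cases (trim1 (rle v).reverse).reverse with h1 | h1
    · rw [← hD] at h1; exact h1
    · exfalso
      rw [← hD] at h1
      have := congrArg List.sum h1
      simp only [List.sum_reverse] at this
      omega
  have : rle v = ((rle v).reverse).reverse := by simp
  rw [this, key1]
  have e : (trim1 (rle v).reverse) = (1 :: D v).reverse := by
    rw [← key2]; simp
  rw [e]
  simp

end Aux3


section Aux4

/-- Expand a sequence of block lengths into a word starting with symbol `x`. -/
def expand : ℕ → List ℕ → List ℕ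
  | _, [] => []
  | x, n :: r => List.replicate n x ++ expand (3 - x) r

theorem expand_length : ∀ (x : ℕ) (l : List ℕ), (expand x l).length = l.sum
  | _, [] => rfl
  | x, n :: r => by
    simp [expand, expand_length (3 - x) r]

theorem expand_word : ∀ (x : ℕ) (l : List ℕ), (x = 1 ∨ x = 2) → IsWord (expand x l)
  | _, [], _ => fun y hy => absurd hy List.not_mem_nil
  | x, n :: r, hx => by
    intro y hy
    rcases List.mem_append.mp hy with hm | hm
    · rw [List.eq_of_mem_replicate hm]; exact hx
    · refine expand_word (3 - x) r ?_ y hm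
      rcases hx with rfl | rfl
      · right; rfl
      · left; rfl

theorem expand_head (x n : ℕ) (r : List ℕ) (hn : 1 ≤ n) :
    (expand x (n :: r)).headI = x ∧ expand x (n :: r) ≠ [] := by
  obtain ⟨m, rfl⟩ : ∃ m, n = m + 1 := ⟨n - 1, by omega⟩
  simp [expand, List.replicate_succ]

theorem rle_expand : ∀ (l : List ℕ) (x : ℕ), (x = 1 ∨ x = 2) → (∀ m ∈ l, 1 ≤ m) →
    rle (expand x l) = l
  | [], _, _, _ => rfl
  | n :: r, x, hx, hl => by
    obtain ⟨m, rfl⟩ : ∃ m, n = m + 1 := ⟨n - 1, by have := hl n (by simp); omega⟩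
    have h3x : 3 - x = 1 ∨ 3 - x = 2 := by
      rcases hx with rfl | rfl
      · right; rfl
      · left; rfl
    have hxne : 3 - x ≠ x := by
      rcases hx with rfl | rfl <;> simp
    have hside : expand (3 - x) r = [] ∨ (expand (3 - x) r).headI ≠ x := by
      cases r with
      | nil => exact Or.inl rfl
      | cons n' r' =>
        right
        rw [(expand_head (3 - x) n' r' (hl n' (by simp))).1]
        exact hxne
    show rle (List.replicate (m + 1) x ++ expand (3 - x) r) = (m + 1) :: r
    rw [rle_rep_append m x _ hside,
      rle_expand r (3 - x) h3x (fun m' hm' => hl m' (by simp [hm']))]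

theorem exists_max_prim (u : List ℕ) (hu : IsWord u) :
    ∃ v, IsWord v ∧ D v = u ∧ v.length = u.sum + 2 := by
  refine ⟨expand 1 (1 :: (u ++ [1])), expand_word _ _ (Or.inl rfl), ?_, ?_⟩
  · have hr : rle (expand 1 (1 :: (u ++ [1]))) = 1 :: (u ++ [1]) := by
      apply rle_expand _ _ (Or.inl rfl)
      intro m hm
      rcases List.mem_cons.mp hm with rfl | hm
      · exact le_refl 1
      · rcases List.mem_append.mp hm with hm | hm
        · rcases hu m hm with rfl | rfl <;> omega
        · simp at hm; omega
    exact D_eq_of_rle hr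
  · rw [expand_length]
    simp
    omega

theorem headI_mem {w : List ℕ} (h : w ≠ []) : w.headI ∈ w := by
  cases w with
  | nil => exact absurd rfl h
  | cons a t => exact List.mem_cons_self

theorem cinf_pair {p q : ℕ} (hp : p = 1 ∨ p = 2) (hq : q = 1 ∨ q = 2) : Cinf [p, q] := by
  have hword : IsWord [p, q] := by
    intro x hx
    simp at hx
    rcases hx with rfl | rfl <;> assumption
  have cinf2 : Cinf [2] := by
    apply cinf_of (by intro x hx; simp at hx; omega)
    have : D [2] = [] := rfl
    rw [this]
    exact cinf_nil
  by_cases hpq : p = q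
  · subst hpq
    apply cinf_of hword
    have hr : rle [p, p] = [2] := by
      rw [rle_cons_eq]; rfl
    have hD : D [p, p] = [2] := by
      unfold D
      rw [hr]
      rfl
    rw [hD]
    exact cinf2
  · apply cinf_of hword
    have hr : rle [p, q] = [1, 1] := by
      rw [rle_cons_ne hpq]; rfl
    have hD : D [p, q] = [] := D_eq_of_rle (by rw [hr]; rfl)
    rw [hD]
    exact cinf_nil

theorem firstblock_one {w : List ℕ} (hw : w ≠ []) (hcw : Cinf w)
    (hext : ∀ b, b = 1 ∨ b = 2 → Cinf (w.headI :: (w ++ [b]))) :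
    ∃ y l, w = w.headI :: y :: l ∧ y ≠ w.headI := by
  have hword : IsWord w := by simpa using hcw 0
  obtain ⟨m, t, e1, e2, e3⟩ := exists_block w hw
  have hx12 : w.headI = 1 ∨ w.headI = 2 := hword _ (headI_mem hw)
  have hCe : Cinf (w.headI :: (w ++ [w.headI])) := hext w.headI hx12
  have hwd : IsWord (D (w.headI :: (w ++ [w.headI]))) := by
    have := hCe 1
    simpa using this
  rcases eq_or_ne t [] with rfl | htne
  · exfalso
    have e4 : w.headI :: (w ++ [w.headI]) = List.replicate (m + 3) w.headI := by
      conv_lhs => rw [e1]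
      simp [List.replicate_succ, List.replicate_succ']
      rw [← List.replicate_succ', ← List.replicate_succ]
    have e5 : rle (w.headI :: (w ++ [w.headI])) = [m + 3] := by
      rw [e4]
      exact rle_replicate (m + 2) w.headI
    obtain ⟨r, hr⟩ := D_head_big e5 (by omega)
    have := hwd (m + 3) (by rw [hr]; exact List.mem_cons_self)
    omega
  · rcases Nat.eq_zero_or_pos m with rfl | hm
    · cases t with
      | nil => exact absurd rfl htne
      | cons y l =>
        refine ⟨y, l, ?_, ?_⟩
        · conv_lhs => rw [e1]
          rfl
        · rcases e2 with h | h
          · exact absurd h htne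
          · simpa using h
    · exfalso
      obtain ⟨m', rfl⟩ : ∃ m', m = m' + 1 := ⟨m - 1, by omega⟩
      have hth : (t ++ [w.headI]).headI ≠ w.headI ∨ (t ++ [w.headI]) = [] := by
        left
        cases t with
        | nil => exact absurd rfl htne
        | cons z t' =>
          rcases e2 with h | h
          · exact absurd h htne
          · simpa using h
      have e4 : w.headI :: (w ++ [w.headI])
          = List.replicate (m' + 3) w.headI ++ (t ++ [w.headI]) := by
        conv_lhs => rw [e1]
        simp [List.replicate_succ]
      have e5 : rle (w.headI :: (w ++ [w.headI]))
          = (m' + 3) :: rle (t ++ [w.headI]) := by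
        rw [e4]
        exact rle_rep_append (m' + 2) w.headI _ (hth.symm.imp_right id)
      obtain ⟨r, hr⟩ := D_head_big e5 (by omega)
      have := hwd (m' + 3) (by rw [hr]; exact List.mem_cons_self)
      omega

theorem one_to_three : ∀ (n : ℕ) (w : List ℕ), w.length ≤ n → Cinf w → w ≠ [] →
    (∀ a b, (a = 1 ∨ a = 2) → (b = 1 ∨ b = 2) → Cinf (a :: (w ++ [b]))) →
    ∀ j, D^[j] w ≠ [] → P3 (D^[j] w) := by
  intro n
  induction n with
  | zero =>
    intro w hlen _ hne _
    exact absurd (List.length_eq_zero_iff.mp (Nat.le_zero.mp hlen)) hne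
  | succ n ih =>
    intro w hlen hcw hne hext
    have hword : IsWord w := by simpa using hcw 0
    have hx12 : w.headI = 1 ∨ w.headI = 2 := hword _ (headI_mem hne)
    obtain ⟨y, l, hw1, hy⟩ := firstblock_one hne hcw (fun b hb => hext w.headI b hx12 hb)
    have h2 : 2 ≤ w.length := by rw [hw1]; simp
    have h1 : (rle w).headI = 1 := by
      conv_lhs => rw [hw1]
      exact (rle_head_one_iff l).mpr (fun hh => hy hh.symm)
    have hrne : w.reverse ≠ [] := by simpa using hne
    have hz12 : w.reverse.headI = 1 ∨ w.reverse.headI = 2 :=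
      hword _ (List.mem_reverse.mp (headI_mem hrne))
    have hextr : ∀ b, b = 1 ∨ b = 2 → Cinf (w.reverse.headI :: (w.reverse ++ [b])) := by
      intro b hb
      have e : (b :: (w ++ [w.reverse.headI])).reverse
          = w.reverse.headI :: (w.reverse ++ [b]) := by simp
      rw [← e]
      exact cinf_reverse (hext b w.reverse.headI hb hz12)
    obtain ⟨y', l', hw1', hy'⟩ := firstblock_one hrne (cinf_reverse hcw) hextr
    have h1r : ((rle w).reverse).headI = 1 := by
      rw [← rle_reverse]
      conv_lhs => rw [hw1']
      exact (rle_head_one_iff l').mpr (fun hh => hy' hh.symm)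
    have hf : rle w = 1 :: (D w ++ [1]) := form_of_heads h2 h1 h1r
    have hP3w : P3 w := P3_of_form hf
    intro j hj
    cases j with
    | zero => simpa using hP3w
    | succ j =>
      rw [Function.iterate_succ_apply] at hj ⊢
      have hDne : D w ≠ [] := by
        intro h0
        rw [h0, D_iterate_nil] at hj
        exact hj rfl
      refine ih (D w) (by have := length_D_lt hne; omega) (cinf_D hcw) hDne ?_ j hj
      intro a' b' ha' hb'
      obtain ⟨a, ha, hconda⟩ : ∃ a, (a = 1 ∨ a = 2) ∧ (if a = w.headI then 2 else 1) = a' := by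
        rcases ha' with rfl | rfl
        · rcases hx12 with hx | hx
          · exact ⟨2, Or.inr rfl, by rw [hx]; norm_num⟩
          · exact ⟨1, Or.inl rfl, by rw [hx]; norm_num⟩
        · exact ⟨w.headI, hx12, by simp⟩
      obtain ⟨b, hb, hcondb⟩ : ∃ b, (b = 1 ∨ b = 2) ∧
          (if b = w.reverse.headI then 2 else 1) = b' := by
        rcases hb' with rfl | rfl
        · rcases hz12 with hz | hz
          · exact ⟨2, Or.inr rfl, by rw [hz]; norm_num⟩
          · exact ⟨1, Or.inl rfl, by rw [hz]; norm_num⟩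
        · exact ⟨w.reverse.headI, hz12, by simp⟩
      have hC : Cinf (a :: (w ++ [b])) := hext a b ha hb
      have hD := D_ext hf a b
      rw [hconda, hcondb] at hD
      rw [← hD]
      exact cinf_D hC

theorem three_to_one : ∀ (n : ℕ) (w : List ℕ), w.length ≤ n → Cinf w → w ≠ [] →
    (∀ j, D^[j] w ≠ [] → P3 (D^[j] w)) →
    ∀ a b, (a = 1 ∨ a = 2) → (b = 1 ∨ b = 2) → Cinf (a :: (w ++ [b])) := by
  intro n
  induction n with
  | zero =>
    intro w hlen _ hne _
    exact absurd (List.length_eq_zero_iff.mp (Nat.le_zero.mp hlen)) hne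
  | succ n ih =>
    intro w hlen hcw hne h3 a b ha hb
    have hword : IsWord w := by simpa using hcw 0
    have hP3w : P3 w := by simpa using h3 0 (by simpa using hne)
    have hf : rle w = 1 :: (D w ++ [1]) := form_of_P3 hP3w
    have hD := D_ext hf a b
    have haw : IsWord (a :: (w ++ [b])) := by
      intro x hx
      rcases List.mem_cons.mp hx with rfl | hx
      · exact ha
      · rcases List.mem_append.mp hx with hx | hx
        · exact hword x hx
        · simp at hx; subst hx; exact hb
    have ha' : (if a = w.headI then 2 else 1) = 1 ∨ (if a = w.headI then 2 else 1) = 2 := by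
      by_cases h : a = w.headI <;> simp [h]
    have hb' : (if b = w.reverse.headI then 2 else 1) = 1 ∨
        (if b = w.reverse.headI then 2 else 1) = 2 := by
      by_cases h : b = w.reverse.headI <;> simp [h]
    rcases eq_or_ne (D w) [] with hDw | hDw
    · rw [hDw] at hD
      simp only [List.nil_append] at hD
      exact cinf_of haw (by rw [hD]; exact cinf_pair ha' hb')
    · apply cinf_of haw
      rw [hD]
      refine ih (D w) (by have := length_D_lt hne; omega) (cinf_D hcw) hDw ?_ _ _ ha' hb'
      intro j hj
      have := h3 (j + 1) (by rwa [Function.iterate_succ_apply])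
      rwa [Function.iterate_succ_apply] at this

theorem three_to_two {w : List ℕ} (hw : Cinf w) (hne : w ≠ [])
    (h3 : ∀ j, D^[j] w ≠ [] → P3 (D^[j] w)) : (root w).length = 2 ∧ Maximal w := by
  have h0 : 0 < height w := height_pos hne
  constructor
  · have hlt : height w - 1 < height w := by omega
    have hne' : D^[height w - 1] w ≠ [] := D_iterate_ne hlt
    have hform := form_of_P3 (h3 _ hne')
    have hD0 : D (D^[height w - 1] w) = [] := by
      have hh := D_iterate_height w
      rwa [show height w = height w - 1 + 1 from by omega, Function.iterate_succ_apply'] at hh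
    rw [hD0] at hform
    have hsum := rle_sum (D^[height w - 1] w)
    rw [hform] at hsum
    simp at hsum
    rw [root]
    omega
  · refine ⟨hw, h0, fun j hj v hv => ?_⟩
    have hne' : D^[j] w ≠ [] := D_iterate_ne (by omega)
    have hform := form_of_P3 (h3 j hne')
    have hsum := rle_sum (D^[j] w)
    rw [hform] at hsum
    simp at hsum
    have hDj : D (D^[j] w) = D^[j + 1] w := (Function.iterate_succ_apply' D j w).symm
    have hb := length_prim_le hv.2
    rw [← hDj] at hb
    omega

theorem two_to_three {w : List ℕ} (hw : Cinf w) (hne : w ≠ [])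
    (h : (root w).length = 2 ∧ Maximal w) : ∀ j, D^[j] w ≠ [] → P3 (D^[j] w) := by
  intro j hj
  have hjh : j < height w := by
    by_contra hh
    exact hj (D_iterate_of_ge (Nat.le_of_not_lt hh))
  by_cases hj2 : j + 2 ≤ height w
  · have hu : IsWord (D^[j + 1] w) := hw (j + 1)
    obtain ⟨v, hv1, hv2, hv3⟩ := exists_max_prim _ hu
    have hmax := h.2.2.2 j hj2 v ⟨hv1, hv2⟩
    have e1 := rle_sum (D^[j] w)
    have e2 : D (D^[j] w) = D^[j + 1] w := (Function.iterate_succ_apply' D j w).symm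
    have e3 := sum_D_ge (D^[j] w)
    have e4 : (rle (D^[j] w)).sum = (D (D^[j] w)).sum + 2 := by
      rw [e2]
      rw [e2] at e3
      omega
    exact P3_of_form (form_of_sum_eq e4)
  · have hj1 : j + 1 = height w := by omega
    have hr : root w = D^[j] w := by
      rw [root, show height w - 1 = j from by omega]
    rw [hr] at h
    obtain ⟨p, q, hpq⟩ := List.length_eq_two.mp h.1
    have hD0 : D (D^[j] w) = [] := by
      have hh := D_iterate_height w
      rwa [← hj1, Function.iterate_succ_apply'] at hh
    rw [hpq] at hD0
    have hne_pq : p ≠ q := by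
      rintro rfl
      have hr2 : rle [p, p] = [2] := by rw [rle_cons_eq]; rfl
      have hD : D [p, p] = [2] := by
        unfold D
        rw [hr2]
        rfl
      rw [hD] at hD0
      simp at hD0
    rw [hpq]
    exact ⟨by simp, by simpa using hne_pq, by simpa using hne_pq.symm⟩

end Aux4

/-- for a nonempty C∞-word, full extendability, being double-rooted
maximal, and all nonempty derivatives beginning and ending with two distinct
symbols, are equivalent. -/
theorem fully_extendable_tfae (w : List ℕ) (hw : Cinf w) (hne : w ≠ []) :
    List.TFAE
      [ Cinf (1 :: (w ++ [1])) ∧ Cinf (1 :: (w ++ [2])) ∧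
          Cinf (2 :: (w ++ [1])) ∧ Cinf (2 :: (w ++ [2])),
        (root w).length = 2 ∧ Maximal w,
        ∀ j, D^[j] w ≠ [] →
          2 ≤ (D^[j] w).length ∧
          (D^[j] w).getD 0 0 ≠ (D^[j] w).getD 1 0 ∧
          (D^[j] w).getD ((D^[j] w).length - 1) 0 ≠ (D^[j] w).getD ((D^[j] w).length - 2) 0 ] := by
  tfae_have 1 → 3 := by
    rintro ⟨h11, h12, h21, h22⟩ j hj
    exact one_to_three w.length w le_rfl hw hne
      (fun a b ha hb => by rcases ha with rfl | rfl <;> rcases hb with rfl | rfl <;> assumption)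
      j hj
  tfae_have 3 → 1 := by
    intro h3
    have key := three_to_one w.length w le_rfl hw hne (fun j hj => h3 j hj)
    exact ⟨key 1 1 (Or.inl rfl) (Or.inl rfl), key 1 2 (Or.inl rfl) (Or.inr rfl),
      key 2 1 (Or.inr rfl) (Or.inl rfl), key 2 2 (Or.inr rfl) (Or.inr rfl)⟩
  tfae_have 3 → 2 := by
    intro h3
    exact three_to_two hw hne (fun j hj => h3 j hj)
  tfae_have 2 → 3 := by
    intro h2
    exact fun j hj => two_to_three hw hne h2 j hj
  tfae_finish

end CInfWords
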